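/- For $n \geq 1$, the non-commuting graph of the group $U_{6n} = \langle a,b : a^{2n} = b^3 = 1, a^{-1}ba = b^{-1}\rangle$ is the complete $4$-partite graph $K_{2n,n,n,n}$. -/

import Mathlib

/-- The non-commuting graph of a group. -/
def noncommGraph (G : Type*) [Group G] :
    SimpleGraph {g : G // g ∉ Subgroup.center G} where
  Adj u v := u.1 * v.1 ≠ v.1 * u.1
  symm := ⟨fun _ _ h e => h e.symm⟩
  loopless := ⟨fun _ h => h rfl⟩

/-- Relations of `U_{6n} = ⟨a, b : a^(2n) = b³ = 1, a⁻¹ b a = b⁻¹⟩`. -/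
def uRels (n : ℕ) : Set (FreeGroup (Fin 2)) :=
  { (FreeGroup.of 0) ^ (2 * n), (FreeGroup.of 1) ^ 3,
    (FreeGroup.of 0)⁻¹ * FreeGroup.of 1 * FreeGroup.of 0 * FreeGroup.of 1 }

namespace U6n

/-- sign of an element of `ZMod (2*n)`. -/
def sgn {n : ℕ} (x : ZMod (2*n)) : ZMod 3 := (-1) ^ x.val

lemma neg_one_pow_mod_two (a : ℕ) : ((-1 : ZMod 3)) ^ a = (-1) ^ (a % 2) := by
  conv_lhs => rw [← Nat.div_add_mod a 2]
  rw [pow_add, pow_mul, neg_one_sq, one_pow, one_mul]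

lemma sgn_add {n : ℕ} (x y : ZMod (2*n)) : sgn (x + y) = sgn x * sgn y := by
  have key : (x + y).val % 2 = (x.val + y.val) % 2 := by
    match n with
    | 0 =>
      show (x + y).natAbs % 2 = (x.natAbs + y.natAbs) % 2
      have key2 : ∀ x y : ℤ, (x + y).natAbs % 2 = (x.natAbs + y.natAbs) % 2 := by
        intro x y
        have h1 : Even ((x+y).natAbs) ↔ Even (x.natAbs + y.natAbs) := by
          rw [Int.natAbs_even, Nat.even_add, Int.natAbs_even, Int.natAbs_even, Int.even_add]
        rw [Nat.even_iff, Nat.even_iff] at h1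
        omega
      exact key2 x y
    | (m+1) =>
      rw [ZMod.val_add]
      conv_rhs => rw [← Nat.mod_mod_of_dvd (x.val + y.val) (⟨m+1, rfl⟩ : 2 ∣ 2*(m+1))]
  unfold sgn
  rw [← pow_add, neg_one_pow_mod_two, neg_one_pow_mod_two ((x:ZMod (2*n)).val + _), key]

end U6n

namespace U6n2

open U6n

lemma sgn_mul_self {n : ℕ} (x : ZMod (2*n)) : sgn x * sgn x = 1 := by
  unfold sgn; rw [← pow_add, ← two_mul, pow_mul, neg_one_sq, one_pow]

lemma sgn_zero {n : ℕ} : sgn (0 : ZMod (2*n)) = 1 := by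
  unfold sgn
  match n with
  | 0 => rfl
  | (m+1) => rw [ZMod.val_zero, pow_zero]

lemma sgn_neg {n : ℕ} (x : ZMod (2*n)) : sgn (-x) = sgn x := by
  have h := sgn_add x (-x)
  rw [add_neg_cancel, sgn_zero] at h
  calc sgn (-x) = (sgn x * sgn x) * sgn (-x) := by rw [sgn_mul_self, one_mul]
  _ = sgn x * (sgn x * sgn (-x)) := mul_assoc _ _ _
  _ = sgn x := by rw [← h, mul_one]

lemma sgn_one {n : ℕ} [NeZero n] : sgn (1 : ZMod (2*n)) = -1 := by
  unfold sgn
  have : Fact (1 < 2*n) := ⟨by have := NeZero.pos n; omega⟩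
  rw [ZMod.val_one, pow_one]

lemma sgn_even {n : ℕ} (x : ZMod (2*n)) (h : Even x.val) : sgn x = 1 := by
  unfold sgn; exact h.neg_one_pow

lemma sgn_odd {n : ℕ} (x : ZMod (2*n)) (h : ¬ Even x.val) : sgn x = -1 := by
  unfold sgn; exact (Nat.not_even_iff_odd.mp h).neg_one_pow

/-- The model group: `ZMod 3 ⋊ ZMod (2n)`. -/
structure Un (n : ℕ) where
  i : ZMod (2*n)
  j : ZMod 3
deriving DecidableEq

namespace Un

variable {n : ℕ}

instance : Group (Un n) where
  mul x y := ⟨x.i + y.i, sgn y.i * x.j + y.j⟩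
  one := ⟨0, 0⟩
  inv x := ⟨-x.i, -(sgn x.i * x.j)⟩
  mul_assoc := by
    rintro ⟨a, b⟩ ⟨c, d⟩ ⟨e, f⟩
    show Un.mk (a + c + e) (sgn e * (sgn c * b + d) + f)
       = Un.mk (a + (c + e)) (sgn (c + e) * b + (sgn e * d + f))
    rw [sgn_add, add_assoc]
    congr 1
    ring
  one_mul := by
    rintro ⟨a, b⟩
    show Un.mk (0 + a) (sgn a * 0 + b) = Un.mk a b
    rw [zero_add, mul_zero, zero_add]
  mul_one := by
    rintro ⟨a, b⟩
    show Un.mk (a + 0) (sgn 0 * b + 0) = Un.mk a b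
    rw [add_zero, sgn_zero, one_mul, add_zero]
  inv_mul_cancel := by
    rintro ⟨a, b⟩
    show Un.mk (-a + a) (sgn a * -(sgn a * b) + b) = Un.mk 0 0
    rw [neg_add_cancel, mul_neg, ← mul_assoc, sgn_mul_self, one_mul, neg_add_cancel]

@[simp] lemma mul_def (x y : Un n) :
    x * y = ⟨x.i + y.i, sgn y.i * x.j + y.j⟩ := rfl

@[simp] lemma one_def : (1 : Un n) = ⟨0, 0⟩ := rfl

@[simp] lemma inv_def (x : Un n) : x⁻¹ = ⟨-x.i, -(sgn x.i * x.j)⟩ := rfl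

/-- generator `a`. -/
def A : Un n := ⟨1, 0⟩
/-- generator `b`. -/
def B : Un n := ⟨0, 1⟩

lemma A_pow (s : ℕ) : (A : Un n) ^ s = ⟨(s : ZMod (2*n)), 0⟩ := by
  induction s with
  | zero => simp
  | succ s ih => rw [pow_succ, ih]; show Un.mk _ _ = _; simp [A]

lemma B_pow (t : ℕ) : (B : Un n) ^ t = ⟨0, (t : ZMod 3)⟩ := by
  induction t with
  | zero => simp
  | succ t ih => rw [pow_succ, ih]; show Un.mk _ _ = _; simp [B, sgn_zero]

lemma A_pow_mul_B_pow (s t : ℕ) :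
    (A : Un n) ^ s * B ^ t = ⟨(s : ZMod (2*n)), (t : ZMod 3)⟩ := by
  rw [A_pow, B_pow, mul_def]
  simp [sgn_zero]

lemma mem_center_iff [NeZero n] (x : Un n) :
    x ∈ Subgroup.center (Un n) ↔ Even x.i.val ∧ x.j = 0 := by
  rw [Subgroup.mem_center_iff]
  constructor
  · intro h
    have hB := congrArg Un.j (h B)
    have hA := congrArg Un.j (h A)
    simp only [mul_def, B, A, sgn_zero, sgn_one, one_mul, mul_zero, mul_one,
      zero_add, add_zero, neg_mul, neg_one_mul] at hB hA
    have hs : sgn x.i = 1 := by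
      rw [add_comm x.j 1] at hB
      exact add_right_cancel hB
    constructor
    · by_contra hodd
      rw [sgn_odd _ hodd] at hs
      exact absurd hs (by decide)
    · have key : ∀ t : ZMod 3, t = -t → t = 0 := by decide
      exact key _ hA
  · rintro ⟨he, hj⟩ y
    rw [mul_def, mul_def, sgn_even _ he, hj]
    rw [add_comm y.i x.i]
    simp
instance instNeZero2n [NeZero n] : NeZero (2*n) := ⟨by have := NeZero.pos n; omega⟩

instance [NeZero n] : Fintype (Un n) :=
  Fintype.ofEquiv (ZMod (2*n) × ZMod 3)
    ⟨fun p => ⟨p.1, p.2⟩, fun x => (x.i, x.j), fun _ => rfl, fun _ => rfl⟩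

/-- The class index of an element. -/
def cls [NeZero n] (x : Un n) : Fin 4 :=
  if Even x.i.val then 0 else ⟨1 + x.j.val, by have := x.j.val_lt; omega⟩

lemma cls_eq_zero_iff [NeZero n] (x : Un n) : cls x = 0 ↔ Even x.i.val := by
  unfold cls
  split
  · simpa
  · simp only [iff_false, *]
    intro h
    exact absurd (congrArg Fin.val h) (by simp)

lemma commute_iff_cls_eq [NeZero n] (x y : Un n)
    (hx : x ∉ Subgroup.center (Un n)) (hy : y ∉ Subgroup.center (Un n)) :
    x * y = y * x ↔ cls x = cls y := by
  rw [mem_center_iff, not_and_or] at hx hy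
  have hmk : x * y = y * x ↔ sgn y.i * x.j + y.j = sgn x.i * y.j + x.j := by
    rw [mul_def, mul_def, Un.mk.injEq, add_comm y.i x.i, eq_self_iff_true, true_and]
  rw [hmk]
  unfold cls
  rcases Nat.even_or_odd x.i.val with hxe | hxo <;>
    rcases Nat.even_or_odd y.i.val with hye | hyo
  · rw [sgn_even _ hxe, sgn_even _ hye, if_pos hxe, if_pos hye]
    simp [add_comm]
  · have hxj : x.j ≠ 0 := by tauto
    rw [sgn_even _ hxe, sgn_odd _ (Nat.not_even_iff_odd.mpr hyo),
      if_pos hxe, if_neg (Nat.not_even_iff_odd.mpr hyo)]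
    constructor
    · intro h
      exfalso
      apply hxj
      have key : ∀ a b : ZMod 3, -1 * a + b = 1 * b + a → a = 0 := by decide
      exact key _ _ h
    · intro h
      exact absurd (congrArg Fin.val h).symm (by simp)
  · have hyj : y.j ≠ 0 := by tauto
    rw [sgn_even _ hye, sgn_odd _ (Nat.not_even_iff_odd.mpr hxo),
      if_pos hye, if_neg (Nat.not_even_iff_odd.mpr hxo)]
    constructor
    · intro h
      exfalso
      apply hyj
      have key : ∀ a b : ZMod 3, 1 * a + b = -1 * b + a → b = 0 := by decide
      exact key _ _ h
    · intro h
      exact absurd (congrArg Fin.val h) (by simp)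
  · rw [sgn_odd _ (Nat.not_even_iff_odd.mpr hxo), sgn_odd _ (Nat.not_even_iff_odd.mpr hyo),
      if_neg (Nat.not_even_iff_odd.mpr hxo), if_neg (Nat.not_even_iff_odd.mpr hyo)]
    have key : ∀ a b : ZMod 3, (-1 * a + b = -1 * b + a ↔ a = b) := by decide
    rw [key]
    constructor
    · intro h; exact Fin.ext (by simp only [Fin.val_mk, h])
    · intro h
      have := congrArg Fin.val h
      simp only [] at this
      have hv : x.j.val = y.j.val := by omega
      exact ZMod.val_injective 3 hv

/-- elements with even `val` in `ZMod (2*n)` number `n`. -/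
def evenEquiv [NeZero n] : {i : ZMod (2*n) // Even i.val} ≃ Fin n where
  toFun x := ⟨x.1.val / 2, by have := x.1.val_lt; omega⟩
  invFun k := ⟨((2*k.val : ℕ) : ZMod (2*n)), by
    rw [ZMod.val_cast_of_lt (by have := k.2; omega)]; exact ⟨k.val, by omega⟩⟩
  left_inv x := by
    obtain ⟨x, hx⟩ := x
    apply Subtype.ext
    simp only
    obtain ⟨c, hc⟩ := hx
    have h2 : 2 * (x.val / 2) = x.val := by omega
    rw [h2, ZMod.natCast_val, ZMod.cast_id]
  right_inv k := by
    apply Fin.ext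
    simp only
    rw [ZMod.val_cast_of_lt (by have := k.2; omega)]
    omega

/-- elements with odd `val` in `ZMod (2*n)` number `n`. -/
def oddEquiv [NeZero n] : {i : ZMod (2*n) // ¬ Even i.val} ≃ Fin n where
  toFun x := ⟨x.1.val / 2, by have := x.1.val_lt; omega⟩
  invFun k := ⟨((2*k.val + 1 : ℕ) : ZMod (2*n)), by
    rw [ZMod.val_cast_of_lt (by have := k.2; omega)]
    rw [Nat.even_iff]
    omega⟩
  left_inv x := by
    obtain ⟨x, hx⟩ := x
    apply Subtype.ext
    simp only
    rw [Nat.even_iff] at hx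
    have h2 : 2 * (x.val / 2) + 1 = x.val := by omega
    rw [h2, ZMod.natCast_val, ZMod.cast_id]
  right_inv k := by
    apply Fin.ext
    simp only
    rw [ZMod.val_cast_of_lt (by have := k.2; omega)]
    omega

/-- The equivalence with the product type. -/
def prodEquiv : Un n ≃ ZMod (2*n) × ZMod 3 where
  toFun x := (x.i, x.j)
  invFun p := ⟨p.1, p.2⟩
  left_inv _ := rfl
  right_inv _ := rfl

lemma cls_eq_iff_of_ne [NeZero n] (x : Un n) (c : Fin 4) (hc : c ≠ 0) :
    cls x = c ↔ ¬ Even x.i.val ∧ x.j = ((c.val - 1 : ℕ) : ZMod 3) := by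
  unfold cls
  by_cases h : Even x.i.val
  · rw [if_pos h]
    simp only [h, not_true_eq_false, false_and, iff_false]
    exact fun h0 => hc h0.symm
  · rw [if_neg h]
    constructor
    · intro hc2
      refine ⟨h, ?_⟩
      have hv : 1 + x.j.val = c.val := congrArg Fin.val hc2
      have hv2 : x.j.val = c.val - 1 := by omega
      rw [← hv2, ZMod.natCast_val, ZMod.cast_id]
    · rintro ⟨-, hj⟩
      apply Fin.ext
      show 1 + x.j.val = c.val
      have hcv : c.val < 4 := c.isLt
      have hc0 : c.val ≠ 0 := fun h0 => hc (Fin.ext h0)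
      rw [hj, ZMod.val_cast_of_lt (by omega)]
      omega

lemma card_fiber [NeZero n] (c : Fin 4) :
    Nat.card {v : {x : Un n // x ∉ Subgroup.center (Un n)} // cls v.1 = c}
      = if c = 0 then 2*n else n := by
  rw [Nat.card_congr (Equiv.subtypeSubtypeEquivSubtypeInter
    (fun x : Un n => x ∉ Subgroup.center (Un n)) (fun x => cls x = c))]
  have hcard2 : Nat.card {j : ZMod 3 // j ≠ 0} = 2 := by
    rw [Nat.card_eq_fintype_card]; decide
  have hcard1 : ∀ k : ZMod 3, Nat.card {j : ZMod 3 // j = k} = 1 := by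
    intro k
    rw [Nat.card_eq_fintype_card, Fintype.card_subtype_eq]
  have hodd : ∀ c : Fin 4, c ≠ 0 →
      Nat.card {x : Un n // x ∉ Subgroup.center (Un n) ∧ cls x = c} = n := by
    intro c hc
    have e : {x : Un n // x ∉ Subgroup.center (Un n) ∧ cls x = c}
        ≃ {i : ZMod (2*n) // ¬ Even i.val} × {j : ZMod 3 // j = ((c.val - 1 : ℕ) : ZMod 3)} := by
      refine (Equiv.subtypeEquiv prodEquiv fun x => ?_).trans (Equiv.subtypeProdEquivProd)
      rw [mem_center_iff, cls_eq_iff_of_ne x c hc]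
      show _ ↔ ¬ Even x.i.val ∧ x.j = _
      tauto
    rw [Nat.card_congr e, Nat.card_prod, Nat.card_congr oddEquiv, Nat.card_eq_fintype_card,
      Fintype.card_fin, hcard1]
    ring
  by_cases hc : c = 0
  · subst hc
    rw [if_pos rfl]
    have e : {x : Un n // x ∉ Subgroup.center (Un n) ∧ cls x = 0}
        ≃ {i : ZMod (2*n) // Even i.val} × {j : ZMod 3 // j ≠ 0} := by
      refine (Equiv.subtypeEquiv prodEquiv fun x => ?_).trans (Equiv.subtypeProdEquivProd)
      rw [mem_center_iff, cls_eq_zero_iff]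
      show _ ↔ Even x.i.val ∧ x.j ≠ 0
      tauto
    rw [Nat.card_congr e, Nat.card_prod, Nat.card_congr evenEquiv, Nat.card_eq_fintype_card,
      Fintype.card_fin, hcard2]
    ring
  · rw [if_neg hc, hodd c hc]

end Un
end U6n2

namespace U6n3
open U6n U6n2 U6n2.Un

variable {n : ℕ}

/-- sign on integers. -/
def sgnZ (u : ℤ) : ℤ := if Even u then 1 else -1

lemma sgnZ_zero : sgnZ 0 = 1 := by simp [sgnZ]

lemma sgnZ_add_one (u : ℤ) : sgnZ (u + 1) = -sgnZ u := by
  rcases Int.even_or_odd u with h | h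
  · rw [sgnZ, sgnZ, if_pos h, if_neg (by rw [Int.even_add_one]; exact fun hh => hh h)]
  · have h' : ¬ Even u := by rwa [← Int.not_even_iff_odd] at h
    rw [sgnZ, sgnZ, if_neg h', if_pos (by rw [Int.even_add_one]; exact h')]
    ring

lemma sgnZ_sub_one (u : ℤ) : sgnZ (u - 1) = -sgnZ u := by
  have := sgnZ_add_one (u - 1)
  rw [sub_add_cancel] at this
  rw [this]; ring

lemma sgnZ_mul_self (u : ℤ) : sgnZ u * sgnZ u = 1 := by
  rcases Int.even_or_odd u with h | h
  · rw [sgnZ, if_pos h]; ring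
  · have h' : ¬ Even u := by rwa [← Int.not_even_iff_odd] at h
    rw [sgnZ, if_neg h']; ring

lemma sgnZ_neg (u : ℤ) : sgnZ (-u) = sgnZ u := by
  simp only [sgnZ, even_neg]

section P

variable (n)

/-- generator `a` of the presented group. -/
def pα : PresentedGroup (uRels n) := PresentedGroup.of 0
/-- generator `b` of the presented group. -/
def pβ : PresentedGroup (uRels n) := PresentedGroup.of 1

lemma rel_mk (r : FreeGroup (Fin 2)) (hr : r ∈ uRels n) :
    (QuotientGroup.mk' (Subgroup.normalClosure (uRels n)) r) = 1 := by
  rw [QuotientGroup.mk'_apply, QuotientGroup.eq_one_iff]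
  exact Subgroup.subset_normalClosure hr

lemma pα_pow : (pα n) ^ (2 * n) = 1 := by
  have h := rel_mk n _ (by left; rfl)
  rw [map_pow] at h
  exact h

lemma pβ_pow : (pβ n) ^ 3 = 1 := by
  have h := rel_mk n _ (by right; left; rfl)
  rw [map_pow] at h
  exact h

lemma pαβ_rel : (pα n)⁻¹ * pβ n * pα n * pβ n = 1 := by
  have h := rel_mk n _ (by right; right; rfl)
  rw [map_mul, map_mul, map_mul, map_inv] at h
  exact h

lemma conj_pβ : (pα n)⁻¹ * pβ n * pα n = (pβ n)⁻¹ := by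
  have h := pαβ_rel n
  calc (pα n)⁻¹ * pβ n * pα n
      = ((pα n)⁻¹ * pβ n * pα n * pβ n) * (pβ n)⁻¹ := by group
  _ = (pβ n)⁻¹ := by rw [h, one_mul]

lemma swap_zpow (k : ℤ) : (pβ n) ^ k * pα n = pα n * (pβ n) ^ (-k) := by
  have h0 : ((pα n)⁻¹ * pβ n * ((pα n)⁻¹)⁻¹) ^ k
      = (pα n)⁻¹ * (pβ n) ^ k * ((pα n)⁻¹)⁻¹ := conj_zpow
  rw [inv_inv, conj_pβ, inv_zpow, ← zpow_neg] at h0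
  calc (pβ n) ^ k * pα n = pα n * ((pα n)⁻¹ * (pβ n) ^ k * pα n) := by group
  _ = pα n * (pβ n) ^ (-k) := by rw [← h0]

lemma swap_zpow' (k : ℤ) : (pβ n) ^ k * (pα n)⁻¹ = (pα n)⁻¹ * (pβ n) ^ (-k) := by
  have h := swap_zpow n (-k)
  rw [neg_neg] at h
  calc (pβ n) ^ k * (pα n)⁻¹ = (pα n)⁻¹ * ((pβ n) ^ (-k) * pα n) * (pα n)⁻¹ := by
        rw [h]; group
  _ = (pα n)⁻¹ * (pβ n) ^ (-k) := by group

lemma comm_zpow (u k : ℤ) :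
    (pβ n) ^ k * (pα n) ^ u = (pα n) ^ u * (pβ n) ^ (sgnZ u * k) := by
  induction u using Int.induction_on with
  | zero => simp [sgnZ_zero]
  | succ v ih =>
    have h1 : (pα n) ^ ((v : ℤ) + 1) = (pα n) ^ (v : ℤ) * pα n := by
      rw [zpow_add, zpow_one]
    rw [h1, ← mul_assoc, ih, mul_assoc, swap_zpow,
      show sgnZ ((v:ℤ) + 1) * k = -(sgnZ (v:ℤ) * k) by rw [sgnZ_add_one]; ring,
      ← mul_assoc]
  | pred v ih =>
    have h1 : (pα n) ^ (-(v : ℤ) - 1) = (pα n) ^ (-(v : ℤ)) * (pα n)⁻¹ := by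
      rw [show -(v:ℤ) - 1 = -(v:ℤ) + (-1) by ring, zpow_add, zpow_neg_one]
    rw [h1, ← mul_assoc, ih, mul_assoc, swap_zpow',
      show sgnZ (-(v:ℤ) - 1) * k = -(sgnZ (-(v:ℤ)) * k) by rw [sgnZ_sub_one]; ring,
      ← mul_assoc]

lemma exists_zpow (g : PresentedGroup (uRels n)) :
    ∃ s t : ℤ, g = (pα n) ^ s * (pβ n) ^ t := by
  have hg : g ∈ Subgroup.closure (Set.range (PresentedGroup.of (rels := uRels n))) := by
    rw [PresentedGroup.closure_range_of]
    trivial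
  induction hg using Subgroup.closure_induction with
  | mem x hx =>
    obtain ⟨i, rfl⟩ := hx
    fin_cases i
    · exact ⟨1, 0, by simp [pα]⟩
    · exact ⟨0, 1, by simp [pβ]⟩
  | one => exact ⟨0, 0, by simp⟩
  | mul x y hx hy ihx ihy =>
    obtain ⟨s, t, rfl⟩ := ihx
    obtain ⟨u, v, rfl⟩ := ihy
    refine ⟨s + u, sgnZ u * t + v, ?_⟩
    rw [mul_assoc, ← mul_assoc ((pβ n)^t), comm_zpow, zpow_add, zpow_add]
    group
  | inv x hx ihx =>
    obtain ⟨s, t, rfl⟩ := ihx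
    refine ⟨-s, sgnZ (-s) * (-t), ?_⟩
    rw [mul_inv_rev, ← zpow_neg, ← zpow_neg, comm_zpow]

lemma zpow_reduce {G : Type*} [Group G] (x : G) {m : ℕ} (hm : 0 < m)
    (hx : x ^ (m : ℤ) = 1) (s : ℤ) :
    x ^ s = x ^ ((s % (m : ℤ)).toNat) := by
  have h0 : (0:ℤ) < (m:ℤ) := by exact_mod_cast hm
  have hnonneg : 0 ≤ s % (m:ℤ) := Int.emod_nonneg s (by omega)
  conv_lhs => rw [← Int.mul_ediv_add_emod s (m:ℤ)]
  rw [zpow_add, zpow_mul, hx, one_zpow, one_mul]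
  conv_lhs => rw [← Int.toNat_of_nonneg hnonneg]
  rw [zpow_natCast]

lemma exists_pow_lt [NeZero n] (g : PresentedGroup (uRels n)) :
    ∃ s t : ℕ, s < 2*n ∧ t < 3 ∧ g = (pα n) ^ s * (pβ n) ^ t := by
  obtain ⟨s, t, rfl⟩ := exists_zpow n g
  have hpos : 0 < 2*n := by have := NeZero.pos n; omega
  have hα : (pα n) ^ (((2*n : ℕ)) : ℤ) = 1 := by rw [zpow_natCast]; exact pα_pow n
  have hβ : (pβ n) ^ ((3 : ℕ) : ℤ) = 1 := by rw [zpow_natCast]; exact pβ_pow n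
  have h2 : ((2*n : ℕ) : ℤ) = 2 * (n : ℤ) := by push_cast; ring
  refine ⟨(s % ((2*n : ℕ) : ℤ)).toNat, (t % ((3:ℕ) : ℤ)).toNat, ?_, ?_, ?_⟩
  · have h1 := Int.emod_lt_of_pos s (b := ((2*n:ℕ):ℤ)) (by exact_mod_cast hpos)
    have h3 := Int.emod_nonneg s (show ((2*n:ℕ):ℤ) ≠ 0 by exact_mod_cast hpos.ne')
    omega
  · have h1 := Int.emod_lt_of_pos t (b := ((3:ℕ):ℤ)) (by norm_num)
    have h3 := Int.emod_nonneg t (show ((3:ℕ):ℤ) ≠ 0 by norm_num)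
    omega
  · rw [← zpow_reduce _ hpos hα s, ← zpow_reduce _ (by norm_num) hβ t]

/-- The images of the generators in the model group. -/
def fgen : Fin 2 → Un n := ![Un.A, Un.B]

lemma lift_rels [NeZero n] : ∀ r ∈ uRels n, FreeGroup.lift (fgen (n := n)) r = 1 := by
  intro r hr
  simp only [uRels, Set.mem_insert_iff, Set.mem_singleton_iff] at hr
  rcases hr with rfl | rfl | rfl
  · rw [map_pow, FreeGroup.lift_apply_of]
    show (Un.A : Un n) ^ (2*n) = 1
    rw [Un.A_pow, ZMod.natCast_self, one_def]
  · rw [map_pow, FreeGroup.lift_apply_of]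
    show (Un.B : Un n) ^ 3 = 1
    rw [Un.B_pow, one_def]
    congr 1
  · rw [map_mul, map_mul, map_mul, map_inv, FreeGroup.lift_apply_of, FreeGroup.lift_apply_of]
    show (Un.A : Un n)⁻¹ * Un.B * Un.A * Un.B = 1
    rw [inv_def, mul_def, mul_def, mul_def, one_def]
    simp only [A, B, sgn_zero, sgn_one, mul_zero, neg_zero, mul_one, one_mul,
      add_zero, zero_add]
    congr 1
    exact neg_add_cancel 1

/-- The homomorphism from the presented group to the model. -/
def Fhom (n : ℕ) [NeZero n] : PresentedGroup (uRels n) →* Un n :=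
  PresentedGroup.toGroup (lift_rels (n := n))

lemma Fhom_pα [NeZero n] : Fhom n (pα n) = Un.A := PresentedGroup.toGroup.of _
lemma Fhom_pβ [NeZero n] : Fhom n (pβ n) = Un.B := PresentedGroup.toGroup.of _

lemma Fhom_pow [NeZero n] (s t : ℕ) :
    Fhom n ((pα n)^s * (pβ n)^t) = ⟨(s : ZMod (2*n)), (t : ZMod 3)⟩ := by
  rw [map_mul, map_pow, map_pow, Fhom_pα, Fhom_pβ, Un.A_pow_mul_B_pow]

lemma Fhom_surj [NeZero n] : Function.Surjective (Fhom n) := by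
  intro x
  refine ⟨(pα n)^(x.i.val) * (pβ n)^(x.j.val), ?_⟩
  rw [Fhom_pow]
  cases x with
  | mk i j =>
    simp only
    congr 1 <;> rw [ZMod.natCast_val, ZMod.cast_id]

lemma Fhom_inj [NeZero n] : Function.Injective (Fhom n) := by
  intro x y hxy
  obtain ⟨s, t, hs, ht, rfl⟩ := exists_pow_lt n x
  obtain ⟨u, v, hu, hv, rfl⟩ := exists_pow_lt n y
  rw [Fhom_pow, Fhom_pow] at hxy
  have hi := congrArg Un.i hxy
  have hj := congrArg Un.j hxy
  simp only at hi hj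
  have hs' : s = u := by
    have h2 := congrArg ZMod.val hi
    rwa [ZMod.val_cast_of_lt hs, ZMod.val_cast_of_lt hu] at h2
  have ht' : t = v := by
    have h2 := congrArg ZMod.val hj
    rwa [ZMod.val_cast_of_lt ht, ZMod.val_cast_of_lt hv] at h2
  rw [hs', ht']

lemma mulEquiv_center_iff {G H : Type*} [Group G] [Group H] (e : G ≃* H) (g : G) :
    g ∈ Subgroup.center G ↔ e g ∈ Subgroup.center H := by
  rw [Subgroup.mem_center_iff, Subgroup.mem_center_iff]
  constructor
  · intro h y
    calc y * e g = e (e.symm y * g) := by rw [map_mul, e.apply_symm_apply]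
    _ = e (g * e.symm y) := by rw [h (e.symm y)]
    _ = e g * y := by rw [map_mul, e.apply_symm_apply]
  · intro h y
    apply e.injective
    rw [map_mul, map_mul]
    exact h (e y)

/-- Transport of the non-commuting graph along a group isomorphism. -/
def noncommGraphIso {G H : Type*} [Group G] [Group H] (e : G ≃* H) :
    noncommGraph G ≃g noncommGraph H where
  toEquiv := Equiv.subtypeEquiv e.toEquiv fun g => not_congr (mulEquiv_center_iff e g)
  map_rel_iff' := by
    rintro ⟨u, hu⟩ ⟨v, hv⟩
    show ¬ (e u * e v = e v * e u) ↔ ¬ (u * v = v * u)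
    rw [← map_mul, ← map_mul]
    exact not_congr ⟨fun h => e.injective h, fun h => congrArg e h⟩

/-- The graph isomorphism for the model group. -/
noncomputable def modelGraphIso (n : ℕ) [NeZero n] :
    noncommGraph (Un n) ≃g SimpleGraph.completeMultipartiteGraph
      (fun i : Fin 4 => Fin (if i = 0 then 2 * n else n)) where
  toEquiv :=
    ((Equiv.sigmaFiberEquiv
        (fun v : {x : Un n // x ∉ Subgroup.center (Un n)} => Un.cls v.1)).symm.trans
      (Equiv.sigmaCongrRight fun c => Finite.equivFinOfCardEq (Un.card_fiber c)))
  map_rel_iff' := by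
    rintro u v
    show ¬ (Un.cls u.1 = Un.cls v.1) ↔ ¬ (u.1 * v.1 = v.1 * u.1)
    exact not_congr (Un.commute_iff_cls_eq u.1 v.1 u.2 v.2).symm

end P
end U6n3

/-- For `n ≥ 1`, the non-commuting graph of `U_{6n}` is the complete 4-partite graph
`K_{2n,n,n,n}`. -/
theorem noncommGraph_U6n (n : ℕ) (hn : 1 ≤ n) :
    Nonempty (noncommGraph (PresentedGroup (uRels n)) ≃g
      SimpleGraph.completeMultipartiteGraph
        fun i : Fin 4 => Fin (if i = 0 then 2 * n else n)) := by
  haveI : NeZero n := ⟨by omega⟩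
  have e : PresentedGroup (uRels n) ≃* U6n2.Un n :=
    MulEquiv.ofBijective (U6n3.Fhom n) ⟨U6n3.Fhom_inj n, U6n3.Fhom_surj n⟩
  exact ⟨(U6n3.noncommGraphIso e).trans (U6n3.modelGraphIso n)⟩
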